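/- (Prucnal–Skvortsov) Medvedev's logic ML is structurally complete: every rule φ ⊢ ψ admissible in ML is derivable in ML, i.e., if for every substitution σ, σ(φ) ∈ ML implies σ(ψ) ∈ ML, then φ → ψ ∈ ML (equivalently, ψ is valid in every model of M_n in which φ is globally true). -/

import Mathlib

inductive Fml : Type where
  | atom : ℕ → Fml
  | bot  : Fml
  | and  : Fml → Fml → Fml
  | or   : Fml → Fml → Fml
  | imp  : Fml → Fml → Fml
deriving DecidableEq

/-- Intuitionistic negation: ¬φ := φ → ⊥. -/
def Fml.neg (φ : Fml) : Fml := .imp φ .bot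

/-- Biconditional. -/
def Fml.iff (φ ψ : Fml) : Fml := .and (.imp φ ψ) (.imp ψ φ)

/-- Disjunction of a list of formulas (empty disjunction is ⊥). -/
def disj : List Fml → Fml
  | [] => .bot
  | [φ] => φ
  | φ :: l => .or φ (disj l)

/-- Conjunction of a list of formulas (empty conjunction is ¬⊥). -/
def conj : List Fml → Fml
  | [] => Fml.neg .bot
  | [φ] => φ
  | φ :: l => .and φ (conj l)

/-- Substitution, extended homomorphically. -/
def Fml.subst (σ : ℕ → Fml) : Fml → Fml
  | .atom p => σ p
  | .bot => .bot
  | .and φ ψ => .and (φ.subst σ) (ψ.subst σ)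
  | .or φ ψ => .or (φ.subst σ) (ψ.subst σ)
  | .imp φ ψ => .imp (φ.subst σ) (ψ.subst σ)

/-- Hilbert-style provability for intuitionistic logic plus extra axioms `Ax`. -/
inductive Prov (Ax : Fml → Prop) : Fml → Prop where
  | ax {φ} : Ax φ → Prov Ax φ
  | k {φ ψ} : Prov Ax (.imp φ (.imp ψ φ))
  | s {φ ψ χ} : Prov Ax (.imp (.imp φ (.imp ψ χ)) (.imp (.imp φ ψ) (.imp φ χ)))
  | andI {φ ψ} : Prov Ax (.imp φ (.imp ψ (.and φ ψ)))
  | andE₁ {φ ψ} : Prov Ax (.imp (.and φ ψ) φ)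
  | andE₂ {φ ψ} : Prov Ax (.imp (.and φ ψ) ψ)
  | orI₁ {φ ψ} : Prov Ax (.imp φ (.or φ ψ))
  | orI₂ {φ ψ} : Prov Ax (.imp ψ (.or φ ψ))
  | orE {φ ψ χ} : Prov Ax (.imp (.imp φ χ) (.imp (.imp ψ χ) (.imp (.or φ ψ) χ)))
  | exfalso {φ} : Prov Ax (.imp .bot φ)
  | mp {φ ψ} : Prov Ax (.imp φ ψ) → Prov Ax φ → Prov Ax ψ

/-- No extra axioms: pure intuitionistic logic is `Prov NoAx`. -/
def NoAx : Fml → Prop := fun _ => False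

/-- Instances of the weak Kreisel–Putnam axiom schema. -/
def wKPAx : Fml → Prop := fun φ =>
  ∃ a b c : Fml, φ = .imp (.imp a.neg (.or b.neg c.neg))
    (.or (.imp a.neg b.neg) (.imp a.neg c.neg))

/-- Intuitionistic Kripke forcing over a preordered set of worlds. -/
def Force {W : Type} [Preorder W] (V : W → ℕ → Prop) : W → Fml → Prop
  | w, .atom p => V w p
  | _, .bot => False
  | w, .and φ ψ => Force V w φ ∧ Force V w ψ
  | w, .or φ ψ => Force V w φ ∨ Force V w ψ
  | w, .imp φ ψ => ∀ v, w ≤ v → Force V v φ → Force V v ψ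

/-- A valuation is monotone (persistent). -/
def MonoVal {W : Type} [Preorder W] (V : W → ℕ → Prop) : Prop :=
  ∀ ⦃w w'⦄, w ≤ w' → ∀ p, V w p → V w' p

/-- The Medvedev frame `M n`: nonempty subsets of `Fin n` ordered by reverse inclusion. -/
def Med (n : ℕ) : Type := {I : Finset (Fin n) // I.Nonempty}

instance {n : ℕ} : PartialOrder (Med n) where
  le I J := J.1 ⊆ I.1
  le_refl I := Finset.Subset.refl _
  le_trans I J K h h' := Finset.Subset.trans h' h
  le_antisymm I J h h' := Subtype.ext (Finset.Subset.antisymm h' h)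

instance {n : ℕ} : DecidableEq (Med n) := Subtype.instDecidableEq

/-- Validity on the Medvedev frame `M n`. -/
def MedValid (n : ℕ) (φ : Fml) : Prop :=
  ∀ V : Med n → ℕ → Prop, MonoVal V → ∀ w, Force V w φ

/-- Medvedev's logic of finite problems. -/
def ML (φ : Fml) : Prop := ∀ n, MedValid n φ

/-- The singleton world `{i}` of `M n`. -/
def single {n : ℕ} (i : Fin n) : Med n := ⟨{i}, Finset.singleton_nonempty i⟩

/-- Exponentiation on ℕ∞ (anything involving ∞ gives ∞). -/
def epow : ℕ∞ → ℕ∞ → ℕ∞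
  | some a, some b => some (a ^ b)
  | _, _ => ⊤

/-- Kreisel–Putnam rank. -/
def rank : Fml → ℕ∞
  | .imp _ .bot => 1
  | .or φ ψ => rank φ + rank ψ
  | .and φ ψ => rank φ * rank ψ
  | .imp φ ψ => epow (rank ψ) (rank φ)
  | _ => ⊤

/-- Disjunction of `α i` over a finite index set. -/
noncomputable def bigOrOn {n : ℕ} (α : Fin n → Fml) (I : Finset (Fin n)) : Fml :=
  disj (I.toList.map α)

/-- `α_I := ¬¬⋁_{i ∈ I} α_i`. -/
noncomputable def alphaF {n : ℕ} (α : Fin n → Fml) (I : Finset (Fin n)) : Fml :=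
  Fml.neg (Fml.neg (bigOrOn α I))

/-! ### Auxiliary material for Statement 18 -/

section SC18

open Classical

lemma med_le_iff {n : ℕ} {I J : Med n} : I ≤ J ↔ J.1 ⊆ I.1 := Iff.rfl

lemma le_single_of_mem {n : ℕ} {J : Med n} {k : Fin n} (hk : k ∈ J.1) : J ≤ single k := by
  rw [med_le_iff]
  simpa [single] using hk

lemma eq_single_of_single_le {n : ℕ} {k : Fin n} {J : Med n} (h : single k ≤ J) :
    J = single k := by
  have h1 : J.1 ⊆ {k} := h
  rcases Finset.subset_singleton_iff.mp h1 with he | he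
  · exact absurd he J.2.ne_empty
  · exact Subtype.ext he

lemma force_persist {W : Type} [Preorder W] {V : W → ℕ → Prop} (hV : MonoVal V) :
    ∀ (χ : Fml) {w w' : W}, w ≤ w' → Force V w χ → Force V w' χ
  | .atom p, _, _, h, hf => hV h p hf
  | .bot, _, _, _, hf => hf.elim
  | .and a b, _, _, h, hf => ⟨force_persist hV a h hf.1, force_persist hV b h hf.2⟩
  | .or a b, _, _, h, hf =>
      hf.elim (fun ha => Or.inl (force_persist hV a h ha))
        (fun hb => Or.inr (force_persist hV b h hb))
  | .imp _ _, _, _, h, hf => fun v hv ha => hf v (le_trans h hv) ha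

lemma force_disj {W : Type} [Preorder W] (V : W → ℕ → Prop) (w : W) :
    ∀ l : List Fml, Force V w (disj l) ↔ ∃ χ ∈ l, Force V w χ
  | [] => by simp [disj, Force]
  | [χ] => by simp [disj]
  | χ :: ξ :: l => by
      have ih := force_disj V w (ξ :: l)
      show Force V w (.or χ (disj (ξ :: l))) ↔ _
      show (Force V w χ ∨ Force V w (disj (ξ :: l))) ↔ _
      rw [ih]
      constructor
      · rintro (hf | ⟨χ', h1, h2⟩)
        · exact ⟨χ, List.mem_cons_self, hf⟩
        · exact ⟨χ', List.mem_cons_of_mem _ h1, h2⟩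
      · rintro ⟨χ', h1, h2⟩
        rcases List.mem_cons.mp h1 with rfl | h1
        · exact Or.inl h2
        · exact Or.inr ⟨χ', h1, h2⟩

lemma force_conj {W : Type} [Preorder W] (V : W → ℕ → Prop) (w : W) :
    ∀ l : List Fml, Force V w (conj l) ↔ ∀ χ ∈ l, Force V w χ
  | [] => by simp [conj, Fml.neg, Force]
  | [χ] => by simp [conj]
  | χ :: ξ :: l => by
      have ih := force_conj V w (ξ :: l)
      show Force V w (.and χ (conj (ξ :: l))) ↔ _
      show (Force V w χ ∧ Force V w (conj (ξ :: l))) ↔ _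
      rw [ih]
      constructor
      · rintro ⟨h1, h2⟩ χ' hχ'
        rcases List.mem_cons.mp hχ' with rfl | hm
        · exact h1
        · exact h2 χ' hm
      · intro hall
        exact ⟨hall χ (List.mem_cons_self),
          fun χ' hm => hall χ' (List.mem_cons_of_mem _ hm)⟩

lemma force_neg_single {m : ℕ} {W : Med m → ℕ → Prop} {k : Fin m} {χ : Fml} :
    Force W (single k) χ.neg ↔ ¬ Force W (single k) χ := by
  constructor
  · intro hf hc
    exact hf (single k) le_rfl hc
  · intro hn v hv hc
    rw [eq_single_of_single_le hv] at hc
    exact hn hc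

lemma force_dneg {m : ℕ} {W : Med m → ℕ → Prop} {J : Med m} {χ : Fml} :
    Force W J χ.neg.neg ↔ ∀ k ∈ J.1, Force W (single k) χ := by
  constructor
  · intro hf k hk
    by_contra hc
    exact hf (single k) (le_single_of_mem hk) (force_neg_single.mpr hc)
  · intro hall v hv hneg
    obtain ⟨k, hk⟩ := v.2
    exact hneg (single k) (le_single_of_mem hk) (hall k (hv hk))

/-- Conjunction of negated atoms over a finset of indices. -/
noncomputable def negConj {n : ℕ} (s : Finset (Fin n)) : Fml :=
  conj ((s.sort (· ≤ ·)).map fun j => Fml.neg (.atom j.val))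

lemma force_negConj_single {m n : ℕ} {W : Med m → ℕ → Prop} {k : Fin m}
    {s : Finset (Fin n)} :
    Force W (single k) (negConj s) ↔ ∀ j ∈ s, ¬ W (single k) j.val := by
  rw [negConj, force_conj]
  constructor
  · intro hf j hj
    have := hf (Fml.neg (.atom j.val)) (by simp [Finset.mem_sort]; exact ⟨j, hj, rfl⟩)
    have := force_neg_single.mp this
    simpa [Force] using this
  · intro hall χ hχ
    simp only [List.mem_map, Finset.mem_sort] at hχ
    obtain ⟨j, hj, rfl⟩ := hχ
    exact force_neg_single.mpr (by simpa [Force] using hall j hj)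

/-- The endpoint-classification family of formulas over the index set `K`. -/
noncomputable def Afam {n : ℕ} (K : Finset (Fin n)) (hK : K.Nonempty) (i : Fin n) : Fml :=
  if i = K.max' hK then negConj (K.filter (· < K.max' hK))
  else .and (negConj (K.filter (· < i))) (.atom i.val)

/-- The relevant filter set at an endpoint. -/
noncomputable def Tset {n m : ℕ} (K : Finset (Fin n)) (hK : K.Nonempty)
    (W : Med m → ℕ → Prop) (k : Fin m) : Finset (Fin n) :=
  K.filter (fun i => i ≠ K.max' hK ∧ W (single k) i.val)

lemma mem_Tset {n m : ℕ} {K : Finset (Fin n)} {hK : K.Nonempty}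
    {W : Med m → ℕ → Prop} {k : Fin m} {i : Fin n} :
    i ∈ Tset K hK W k ↔ i ∈ K ∧ i ≠ K.max' hK ∧ W (single k) i.val := by
  simp [Tset]

/-- The endpoint classification map determined by a valuation `W` on `Med m`. -/
noncomputable def gfun {n m : ℕ} (K : Finset (Fin n)) (hK : K.Nonempty)
    (W : Med m → ℕ → Prop) (k : Fin m) : Fin n :=
  if h : (Tset K hK W k).Nonempty then (Tset K hK W k).min' h else K.max' hK

lemma gfun_mem {n m : ℕ} (K : Finset (Fin n)) (hK : K.Nonempty)
    (W : Med m → ℕ → Prop) (k : Fin m) : gfun K hK W k ∈ K := by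
  rw [gfun]
  split
  · exact (mem_Tset.mp (Finset.min'_mem _ _)).1
  · exact K.max'_mem hK

lemma force_Afam {n m : ℕ} (K : Finset (Fin n)) (hK : K.Nonempty)
    (W : Med m → ℕ → Prop) (k : Fin m) {i : Fin n} (hi : i ∈ K) :
    Force W (single k) (Afam K hK i) ↔ i = gfun K hK W k := by
  by_cases him : i = K.max' hK
  · subst him
    rw [Afam, if_pos rfl, force_negConj_single]
    constructor
    · intro hall
      rw [gfun, dif_neg]
      rintro ⟨j, hj⟩
      obtain ⟨hj1, hj2, hj3⟩ := mem_Tset.mp hj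
      exact hall j (Finset.mem_filter.mpr ⟨hj1, lt_of_le_of_ne (K.le_max' j hj1) hj2⟩) hj3
    · intro hg j hj hb
      obtain ⟨hj1, hj2⟩ := Finset.mem_filter.mp hj
      have hjT : j ∈ Tset K hK W k := mem_Tset.mpr ⟨hj1, ne_of_lt hj2, hb⟩
      have hTne : (Tset K hK W k).Nonempty := ⟨j, hjT⟩
      rw [gfun, dif_pos hTne] at hg
      exact (mem_Tset.mp (Finset.min'_mem _ hTne)).2.1 hg.symm
  · rw [Afam, if_neg him]
    constructor
    · rintro ⟨hneg, hatom⟩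
      rw [force_negConj_single] at hneg
      have hatom' : W (single k) i.val := by simpa [Force] using hatom
      have hiT : i ∈ Tset K hK W k := mem_Tset.mpr ⟨hi, him, hatom'⟩
      have hTne : (Tset K hK W k).Nonempty := ⟨i, hiT⟩
      rw [gfun, dif_pos hTne]
      obtain ⟨hm1, hm2, hm3⟩ := mem_Tset.mp (Finset.min'_mem _ hTne)
      have hle : (Tset K hK W k).min' hTne ≤ i := Finset.min'_le _ i hiT
      rcases lt_or_eq_of_le hle with hlt | heq
      · exact absurd hm3 (hneg _ (Finset.mem_filter.mpr ⟨hm1, hlt⟩))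
      · exact heq.symm
    · intro hg
      have hTne : (Tset K hK W k).Nonempty := by
        by_contra hc
        rw [gfun, dif_neg hc] at hg
        exact him hg
      rw [gfun, dif_pos hTne] at hg
      obtain ⟨hm1, hm2, hm3⟩ := mem_Tset.mp (Finset.min'_mem _ hTne)
      constructor
      · rw [force_negConj_single]
        intro j hj hb
        obtain ⟨hj1, hj2⟩ := Finset.mem_filter.mp hj
        have hjne : j ≠ K.max' hK := by
          intro hjm
          rw [hjm, hg] at hj2
          exact absurd (K.le_max' _ hm1) (not_le.mpr hj2)
        have hjT : j ∈ Tset K hK W k := mem_Tset.mpr ⟨hj1, hjne, hb⟩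
        have := Finset.min'_le _ j hjT
        rw [← hg] at this
        exact absurd hj2 (not_lt.mpr this)
      · have : W (single k) ((Tset K hK W k).min' hTne).val := hm3
        rw [← hg] at this
        simpa [Force] using this

lemma force_alphaF {n m : ℕ} (K : Finset (Fin n)) (hK : K.Nonempty)
    (W : Med m → ℕ → Prop) (J : Med m) {S : Finset (Fin n)} (hS : S ⊆ K) :
    Force W J (alphaF (Afam K hK) S) ↔ ∀ k ∈ J.1, gfun K hK W k ∈ S := by
  rw [alphaF, force_dneg]
  apply forall₂_congr
  intro k hk
  rw [bigOrOn, force_disj]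
  constructor
  · rintro ⟨χ, hχ, hf⟩
    simp only [List.mem_map, Finset.mem_toList] at hχ
    obtain ⟨i, hiS, rfl⟩ := hχ
    rw [force_Afam K hK W k (hS hiS)] at hf
    rwa [← hf]
  · intro hg
    refine ⟨Afam K hK (gfun K hK W k), ?_, ?_⟩
    · simp only [List.mem_map, Finset.mem_toList]
      exact ⟨_, hg, rfl⟩
    · exact (force_Afam K hK W k (hS hg)).mpr rfl

/-- The Prucnal–Skvortsov substitution determined by `K` and `V`. -/
noncomputable def pSub {n : ℕ} (K : Finset (Fin n)) (hK : K.Nonempty)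
    (V : Med n → ℕ → Prop) (p : ℕ) : Fml :=
  disj (((Finset.univ : Finset (Finset (Fin n))).filter
    (fun S => S ⊆ K ∧ ∃ hS : S.Nonempty, V ⟨S, hS⟩ p)).toList.map
    (fun S => alphaF (Afam K hK) S))

/-- The p-morphism from `Med m` to (the upset of `K` in) `Med n` induced by `W`. -/
noncomputable def fMap {n m : ℕ} (K : Finset (Fin n)) (hK : K.Nonempty)
    (W : Med m → ℕ → Prop) (J : Med m) : Med n :=
  ⟨J.1.image (gfun K hK W), J.2.image _⟩

lemma fMap_subset {n m : ℕ} (K : Finset (Fin n)) (hK : K.Nonempty)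
    (W : Med m → ℕ → Prop) (J : Med m) : (fMap K hK W J).1 ⊆ K := by
  intro i hi
  simp only [fMap, Finset.mem_image] at hi
  obtain ⟨k, _, rfl⟩ := hi
  exact gfun_mem K hK W k

/-- Truth lemma. -/
lemma truth_lemma {n m : ℕ} (K : Finset (Fin n)) (hK : K.Nonempty)
    {V : Med n → ℕ → Prop} (hV : MonoVal V) (W : Med m → ℕ → Prop) :
    ∀ (χ : Fml) (J : Med m),
      Force W J (χ.subst (pSub K hK V)) ↔ Force V (fMap K hK W J) χ
  | .atom p, J => by
      show Force W J (pSub K hK V p) ↔ V (fMap K hK W J) p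
      rw [pSub, force_disj]
      constructor
      · rintro ⟨χ, hχ, hf⟩
        simp only [List.mem_map, Finset.mem_toList, Finset.mem_filter] at hχ
        obtain ⟨S, ⟨-, hSK, hSne, hVS⟩, rfl⟩ := hχ
        rw [force_alphaF K hK W J hSK] at hf
        have hsub : (fMap K hK W J).1 ⊆ S := by
          intro i hi
          simp only [fMap, Finset.mem_image] at hi
          obtain ⟨k, hk, rfl⟩ := hi
          exact hf k hk
        exact hV ((med_le_iff (I := ⟨S, hSne⟩) (J := fMap K hK W J)).mpr hsub) p hVS
      · intro hVp
        refine ⟨alphaF (Afam K hK) (fMap K hK W J).1, ?_, ?_⟩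
        · simp only [List.mem_map, Finset.mem_toList, Finset.mem_filter]
          exact ⟨(fMap K hK W J).1, ⟨Finset.mem_univ _, fMap_subset K hK W J,
            (fMap K hK W J).2, hVp⟩, rfl⟩
        · rw [force_alphaF K hK W J (fMap_subset K hK W J)]
          intro k hk
          simp only [fMap, Finset.mem_image]
          exact ⟨k, hk, rfl⟩
  | .bot, J => Iff.rfl
  | .and a b, J => by
      show (Force W J _ ∧ Force W J _) ↔ (Force V _ a ∧ Force V _ b)
      rw [truth_lemma K hK hV W a J, truth_lemma K hK hV W b J]
  | .or a b, J => by
      show (Force W J _ ∨ Force W J _) ↔ (Force V _ a ∨ Force V _ b)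
      rw [truth_lemma K hK hV W a J, truth_lemma K hK hV W b J]
  | .imp a b, J => by
      constructor
      · intro hf I' hle ha
        -- back condition: find J' ≥ J with fMap J' = I'
        have hsub : I'.1 ⊆ J.1.image (gfun K hK W) := hle
        set J' : Med m := ⟨J.1.filter (fun k => gfun K hK W k ∈ I'.1), by
          obtain ⟨i, hi⟩ := I'.2
          obtain ⟨k, hk, hgk⟩ := Finset.mem_image.mp (hsub hi)
          exact ⟨k, Finset.mem_filter.mpr ⟨hk, by rw [hgk]; exact hi⟩⟩⟩ with hJ'
        have hJle : J ≤ J' := by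
          refine (med_le_iff (I := J) (J := J')).mpr ?_
          rw [hJ']
          exact Finset.filter_subset _ _
        have hfm : fMap K hK W J' = I' := by
          apply Subtype.ext
          apply Finset.Subset.antisymm
          · intro i hi
            simp only [fMap, hJ', Finset.mem_image, Finset.mem_filter] at hi
            obtain ⟨k, ⟨-, hk2⟩, rfl⟩ := hi
            exact hk2
          · intro i hi
            obtain ⟨k, hk, hgk⟩ := Finset.mem_image.mp (hsub hi)
            simp only [fMap, hJ', Finset.mem_image, Finset.mem_filter]
            exact ⟨k, ⟨hk, by rw [hgk]; exact hi⟩, hgk⟩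
        have := hf J' hJle ((truth_lemma K hK hV W a J').mpr (by rw [hfm]; exact ha))
        have := (truth_lemma K hK hV W b J').mp this
        rwa [hfm] at this
      · intro hf J' hle ha
        have hmono : fMap K hK W J ≤ fMap K hK W J' :=
          (med_le_iff (I := fMap K hK W J) (J := fMap K hK W J')).mpr
            (Finset.image_subset_image hle)
        have ha' := (truth_lemma K hK hV W a J').mp ha
        exact (truth_lemma K hK hV W b J').mpr (hf _ hmono ha')

/-- The universal valuation on `Med n`. -/
def uVal (n : ℕ) : Med n → ℕ → Prop := fun J q => ∃ i : Fin n, q = i.val ∧ J = single i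

lemma uVal_mono (n : ℕ) : MonoVal (uVal n) := by
  intro J J' hle p hp
  obtain ⟨i, rfl, hJ⟩ := hp
  refine ⟨i, rfl, ?_⟩
  rw [hJ] at hle
  exact eq_single_of_single_le hle

lemma gfun_uVal {n : ℕ} (K : Finset (Fin n)) (hK : K.Nonempty) {k : Fin n} (hk : k ∈ K) :
    gfun K hK (uVal n) k = k := by
  have hb : ∀ i : Fin n, uVal n (single k) i.val ↔ i = k := by
    intro i
    constructor
    · rintro ⟨i', hval, hsing⟩
      have hii : i' = i := Fin.ext hval.symm
      subst hii
      have hset := congrArg (fun J : Med n => J.1) hsing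
      simp only [single] at hset
      exact (Finset.singleton_injective hset).symm
    · intro hik
      exact ⟨k, by rw [hik], rfl⟩
  by_cases hkM : k = K.max' hK
  · have hTe : ¬ (Tset K hK (uVal n) k).Nonempty := by
      rintro ⟨j, hj⟩
      obtain ⟨hj1, hj2, hj3⟩ := mem_Tset.mp hj
      exact hj2 (by rw [(hb j).mp hj3, hkM])
    rw [gfun, dif_neg hTe, ← hkM]

  · have hkT : k ∈ Tset K hK (uVal n) k := mem_Tset.mpr ⟨hk, hkM, (hb k).mpr rfl⟩
    have hTne : (Tset K hK (uVal n) k).Nonempty := ⟨k, hkT⟩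
    rw [gfun, dif_pos hTne]
    exact (hb _).mp (mem_Tset.mp (Finset.min'_mem _ hTne)).2.2

end SC18

/-- Prucnal–Skvortsov: Medvedev's logic is structurally complete: every
admissible rule `φ ⊢ ψ` is derivable, i.e. `φ → ψ ∈ ML`. -/
theorem stmt18 (φ ψ : Fml)
    (h : ∀ σ : ℕ → Fml, ML (φ.subst σ) → ML (ψ.subst σ)) :
    ML (.imp φ ψ) := by
  intro n V hV w
  intro v hv hφ
  by_contra hψ
  have hK : v.1.Nonempty := v.2
  have h1 : ML (φ.subst (pSub v.1 hK V)) := by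
    intro m W hW J
    rw [truth_lemma v.1 hK hV W φ J]
    refine force_persist hV φ (w := v) ?_ hφ
    exact (med_le_iff (I := v) (J := fMap v.1 hK W J)).mpr (fMap_subset v.1 hK W J)
  have h2 := h (pSub v.1 hK V) h1 n (uVal n) (uVal_mono n) v
  rw [truth_lemma v.1 hK hV (uVal n) ψ v] at h2
  have hfix : fMap v.1 hK (uVal n) v = v := by
    apply Subtype.ext
    show v.1.image (gfun v.1 hK (uVal n)) = v.1
    apply Finset.Subset.antisymm
    · intro i hi
      obtain ⟨k, hk, rfl⟩ := Finset.mem_image.mp hi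
      rwa [gfun_uVal v.1 hK hk]
    · intro i hi
      exact Finset.mem_image.mpr ⟨i, hi, gfun_uVal v.1 hK hi⟩
  rw [hfix] at h2
  exact hψ h2
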